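/- Let X ⊆ ℝⁿ be a pointed closed convex set and ỹ ∈ ℝⁿ \ X. Then there exists a rational vector a ∈ ℚⁿ such that sup_{x∈X}⟨a,x⟩ < ⟨a,ỹ⟩. -/

import Mathlib

open RealInnerProductSpace

noncomputable def supp {n : ℕ} (C : Set (EuclideanSpace ℝ (Fin n)))
    (a : EuclideanSpace ℝ (Fin n)) : EReal :=
  ⨆ x ∈ C, ((⟪a, x⟫ : ℝ) : EReal)

def barrierCone {n : ℕ} (C : Set (EuclideanSpace ℝ (Fin n))) :
    Set (EuclideanSpace ℝ (Fin n)) :=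
  {a | supp C a < ⊤}

def recCone {n : ℕ} (C : Set (EuclideanSpace ℝ (Fin n))) :
    Set (EuclideanSpace ℝ (Fin n)) :=
  {d | ∀ x ∈ C, ∀ t : ℝ, 0 ≤ t → x + t • d ∈ C}

section Aux

open Filter Topology Metric

variable {n : ℕ}

lemma recCone_zero (X : Set (EuclideanSpace ℝ (Fin n))) : (0 : EuclideanSpace ℝ (Fin n)) ∈ recCone X :=
  fun x hx t _ => by simpa using hx

lemma recCone_add {X : Set (EuclideanSpace ℝ (Fin n))} {d₁ d₂ : EuclideanSpace ℝ (Fin n)}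
    (h₁ : d₁ ∈ recCone X) (h₂ : d₂ ∈ recCone X) : d₁ + d₂ ∈ recCone X := by
  intro x hx t ht
  have := h₂ _ (h₁ x hx t ht) t ht
  rwa [smul_add, ← add_assoc]

lemma recCone_smul {X : Set (EuclideanSpace ℝ (Fin n))} {s : ℝ} (hs : 0 ≤ s)
    {d : EuclideanSpace ℝ (Fin n)} (hd : d ∈ recCone X) : s • d ∈ recCone X := by
  intro x hx t ht
  have := hd x hx (t * s) (mul_nonneg ht hs)
  rwa [smul_smul]

lemma recCone_closed {X : Set (EuclideanSpace ℝ (Fin n))} (hcl : IsClosed X) :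
    IsClosed (recCone X) := by
  have h : recCone X = ⋂ (x ∈ X) (t : ℝ) (_ : 0 ≤ t), (fun d => x + t • d) ⁻¹' X := by
    ext d
    simp [recCone, Set.mem_iInter]
  rw [h]
  exact isClosed_iInter fun x => isClosed_iInter fun _ => isClosed_iInter fun t =>
    isClosed_iInter fun ht => hcl.preimage (continuous_const.add (continuous_id.const_smul t))

lemma ratApprox (z : EuclideanSpace ℝ (Fin n)) {r : ℝ} (hr : 0 < r) :
    ∃ a : EuclideanSpace ℝ (Fin n), (∀ i, ∃ q : ℚ, a i = (q : ℝ)) ∧ dist a z < r := by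
  have hr' : 0 < r / (n + 1) := by positivity
  have h : ∀ i : Fin n, ∃ q : ℚ, |(q : ℝ) - z i| < r / (n + 1) := by
    intro i
    obtain ⟨q, hq1, hq2⟩ := exists_rat_btwn (show z i < z i + r / (n + 1) by linarith)
    exact ⟨q, abs_sub_lt_iff.2 ⟨by linarith, by linarith⟩⟩
  choose q hq using h
  refine ⟨WithLp.toLp 2 (fun i => (q i : ℝ)), fun i => ⟨q i, rfl⟩, ?_⟩
  rw [EuclideanSpace.dist_eq]
  have hb : ∀ i : Fin n, dist ((q i : ℝ)) (z i) ^ 2 ≤ (r / (n + 1)) ^ 2 := by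
    intro i
    rw [Real.dist_eq]
    exact pow_le_pow_left₀ (abs_nonneg _) (hq i).le 2
  have hsum : (∑ i : Fin n, dist ((q i : ℝ)) (z i) ^ 2) ≤ n * (r / (n + 1)) ^ 2 := by
    calc (∑ i : Fin n, dist ((q i : ℝ)) (z i) ^ 2) ≤ ∑ _i : Fin n, (r / (n + 1)) ^ 2 :=
          Finset.sum_le_sum fun i _ => hb i
      _ = n * (r / (n + 1)) ^ 2 := by simp [mul_comm]
  have hlt : (n : ℝ) * (r / (n + 1)) ^ 2 < r ^ 2 := by
    have h1 : (0 : ℝ) < (n : ℝ) + 1 := by positivity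
    have h2 : (n : ℝ) < ((n : ℝ) + 1) ^ 2 := by nlinarith [Nat.cast_nonneg (α := ℝ) n]
    have h3 : (0:ℝ) < ((n:ℝ) + 1) ^ 2 := by positivity
    have hr2 : (0:ℝ) < r ^ 2 := by positivity
    rw [div_pow, mul_div_assoc', div_lt_iff₀ h3]
    nlinarith
  have hfin : (∑ i : Fin n, dist ((q i : ℝ)) (z i) ^ 2) < r ^ 2 := lt_of_le_of_lt hsum hlt
  calc √(∑ i : Fin n, dist ((q i : ℝ)) (z i) ^ 2) < √(r ^ 2) :=
        Real.sqrt_lt_sqrt (Finset.sum_nonneg fun i _ => sq_nonneg _) hfin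
    _ = r := Real.sqrt_sq hr.le

lemma mem_recCone_of_tendsto {X : Set (EuclideanSpace ℝ (Fin n))} (hcl : IsClosed X)
    (hconv : Convex ℝ X) {x : ℕ → EuclideanSpace ℝ (Fin n)} (hx : ∀ k, x k ∈ X)
    (hnorm : Tendsto (fun k => ‖x k‖) atTop atTop)
    {d : EuclideanSpace ℝ (Fin n)}
    (hd : Tendsto (fun k => (‖x k‖)⁻¹ • x k) atTop (𝓝 d)) :
    d ∈ recCone X := by
  intro x₀ hx₀ t ht
  rcases ht.eq_or_lt with h0 | hpos
  · simpa [← h0] using hx₀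
  · set y : ℕ → EuclideanSpace ℝ (Fin n) :=
      fun k => x₀ + t • ((‖x k‖)⁻¹ • x k) - (t * (‖x k‖)⁻¹) • x₀ with hy
    have hyX : ∀ᶠ k in atTop, y k ∈ X := by
      filter_upwards [hnorm.eventually_ge_atTop t, hnorm.eventually_gt_atTop 0] with k hk hk0
      have hs1 : 0 ≤ t * (‖x k‖)⁻¹ := mul_nonneg ht (by positivity)
      have hs2 : t * (‖x k‖)⁻¹ ≤ 1 := by
        have h7 : t * (‖x k‖)⁻¹ ≤ ‖x k‖ * (‖x k‖)⁻¹ :=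
          mul_le_mul_of_nonneg_right hk (by positivity)
        rwa [mul_inv_cancel₀ hk0.ne'] at h7
      have hmem := hconv hx₀ (hx k) (by linarith : (0:ℝ) ≤ 1 - t * (‖x k‖)⁻¹) hs1 (by ring)
      have heq : y k = (1 - t * (‖x k‖)⁻¹) • x₀ + (t * (‖x k‖)⁻¹) • x k := by
        simp only [hy, smul_smul, sub_smul, one_smul]
        abel
      rw [heq]
      exact hmem
    have h1 : Tendsto (fun k => (‖x k‖)⁻¹) atTop (𝓝 0) := hnorm.inv_tendsto_atTop
    have h2 : Tendsto (fun k => (t * (‖x k‖)⁻¹) • x₀) atTop (𝓝 ((t * 0) • x₀)) :=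
      ((tendsto_const_nhds.mul h1).smul tendsto_const_nhds)
    have h3 : Tendsto (fun k => x₀ + t • ((‖x k‖)⁻¹ • x k)) atTop (𝓝 (x₀ + t • d)) :=
      tendsto_const_nhds.add (hd.const_smul t)
    have hlim : Tendsto y atTop (𝓝 (x₀ + t • d)) := by
      have h4 := h3.sub h2
      simpa using h4
    exact hcl.mem_of_tendsto hlim hyX

lemma uniform_bound {X : Set (EuclideanSpace ℝ (Fin n))} (hcl : IsClosed X) (hconv : Convex ℝ X)
    (a₀ : EuclideanSpace ℝ (Fin n)) (ρ : ℝ)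
    (hneg : ∀ a ∈ closedBall a₀ ρ, ∀ d ∈ recCone X, ‖d‖ = 1 → ⟪a, d⟫ < 0) :
    ∃ M : ℝ, ∀ a ∈ closedBall a₀ ρ, ∀ x ∈ X, ⟪a, x⟫ ≤ M := by
  by_contra hM
  push_neg at hM
  choose a ha x hx hval using fun k : ℕ => hM k
  set C := ‖a₀‖ + |ρ| + 1 with hC
  have hCpos : 0 < C := by positivity
  have hak : ∀ k, ‖a k‖ ≤ C := by
    intro k
    have h1 : dist (a k) a₀ ≤ ρ := mem_closedBall.mp (ha k)
    have h2 : ‖a k‖ ≤ ‖a₀‖ + ‖a k - a₀‖ := by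
      have := norm_add_le a₀ (a k - a₀)
      simpa using this
    rw [dist_eq_norm] at h1
    have := le_abs_self ρ
    linarith
  have hlow : ∀ k : ℕ, (k : ℝ) / C ≤ ‖x k‖ := by
    intro k
    have h1 : (k : ℝ) < ⟪a k, x k⟫ := hval k
    have h2 : ⟪a k, x k⟫ ≤ ‖a k‖ * ‖x k‖ := real_inner_le_norm _ _
    have h3 : ‖a k‖ * ‖x k‖ ≤ C * ‖x k‖ := mul_le_mul_of_nonneg_right (hak k) (norm_nonneg _)
    rw [div_le_iff₀ hCpos]
    nlinarith
  have hxnorm : Tendsto (fun k => ‖x k‖) atTop atTop :=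
    tendsto_atTop_mono hlow (tendsto_natCast_atTop_atTop.atTop_div_const hCpos)
  have hx0 : ∀ k, 0 < ‖x k‖ := by
    intro k
    rcases eq_or_ne (x k) 0 with h | h
    · exfalso
      have h1 := hval k
      rw [h, inner_zero_right] at h1
      exact absurd h1 (not_lt.2 (Nat.cast_nonneg k))
    · exact norm_pos_iff.2 h
  set v : ℕ → EuclideanSpace ℝ (Fin n) := fun k => (‖x k‖)⁻¹ • x k with hvdef
  have hv : ∀ k, v k ∈ sphere (0 : EuclideanSpace ℝ (Fin n)) 1 := by
    intro k
    rw [mem_sphere_zero_iff_norm, hvdef]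
    rw [norm_smul, norm_inv, norm_norm]
    field_simp [(hx0 k).ne']
  have hcomp : IsCompact ((closedBall a₀ ρ) ×ˢ (sphere (0 : EuclideanSpace ℝ (Fin n)) 1)) :=
    (isCompact_closedBall _ _).prod (isCompact_sphere _ _)
  obtain ⟨⟨aL, d⟩, ⟨haB, hdS⟩, φ, hφ, hlim⟩ :=
    hcomp.tendsto_subseq (x := fun k => (a k, v k)) (fun k => ⟨ha k, hv k⟩)
  have hlima : Tendsto (fun k => a (φ k)) atTop (𝓝 aL) :=
    (continuous_fst.tendsto _).comp hlim
  have hlimv : Tendsto (fun k => v (φ k)) atTop (𝓝 d) :=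
    (continuous_snd.tendsto _).comp hlim
  have hdK : d ∈ recCone X :=
    mem_recCone_of_tendsto hcl hconv (fun k => hx (φ k))
      (hxnorm.comp hφ.tendsto_atTop) hlimv
  have hinner : Tendsto (fun k => ⟪a (φ k), v (φ k)⟫) atTop (𝓝 ⟪aL, d⟫) :=
    hlima.inner hlimv
  have hnn : ∀ k, 0 ≤ ⟪a (φ k), v (φ k)⟫ := by
    intro k
    rw [hvdef]
    rw [real_inner_smul_right]
    have h1 : (0:ℝ) ≤ ⟪a (φ k), x (φ k)⟫ := le_of_lt (lt_of_le_of_lt (Nat.cast_nonneg _) (hval (φ k)))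
    positivity
  have hge : 0 ≤ ⟪aL, d⟫ := ge_of_tendsto hinner (Filter.Eventually.of_forall hnn)
  exact absurd hge (not_le.2 (hneg aL haB d hdK (mem_sphere_zero_iff_norm.mp hdS)))

lemma exists_neg_on_cone {X : Set (EuclideanSpace ℝ (Fin n))} (hcl : IsClosed X)
    (hpt : recCone X ∩ (-recCone X) = {0}) :
    ∃ c : EuclideanSpace ℝ (Fin n), ∀ d ∈ recCone X, d ≠ 0 → ⟪c, d⟫ < 0 := by
  classical
  set K : ConvexCone ℝ (EuclideanSpace ℝ (Fin n)) :=
    { carrier := recCone X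
      smul_mem' := fun {s} hs {d} hd => recCone_smul (le_of_lt hs) hd
      add_mem' := fun {d₁} h₁ {d₂} h₂ => recCone_add h₁ h₂ } with hKdef
  have hKcl : IsClosed (K : Set (EuclideanSpace ℝ (Fin n))) := recCone_closed hcl
  have hKne : (K : Set (EuclideanSpace ℝ (Fin n))).Nonempty := ⟨0, recCone_zero X⟩
  have hdd : ((ProperCone.innerDual ((ProperCone.innerDual (K : Set (EuclideanSpace ℝ (Fin n))) : Set (EuclideanSpace ℝ (Fin n)))) : Set (EuclideanSpace ℝ (Fin n)))) = K := by
    have := ProperCone.innerDual_innerDual (⟨K.toPointedCone (recCone_zero X), hKcl⟩ : ProperCone ℝ (EuclideanSpace ℝ (Fin n)))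
    exact congrArg (fun C : ProperCone ℝ (EuclideanSpace ℝ (Fin n)) => (C : Set (EuclideanSpace ℝ (Fin n)))) this
  set D : Set (EuclideanSpace ℝ (Fin n)) :=
    ((ProperCone.innerDual (K : Set (EuclideanSpace ℝ (Fin n)))) : Set (EuclideanSpace ℝ (Fin n))) with hDdef
  have hD0 : (0 : EuclideanSpace ℝ (Fin n)) ∈ D := fun x _ => by show 0 ≤ ⟪x, 0⟫; rw [inner_zero_right]
  have hspan : Submodule.span ℝ D = ⊤ := by
    by_contra hne
    have : (Submodule.span ℝ D)ᗮ ≠ ⊥ := by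
      intro hbot
      exact hne (Submodule.orthogonal_eq_bot_iff.mp hbot)
    obtain ⟨v, hv, hv0⟩ := Submodule.exists_mem_ne_zero_of_ne_bot this
    have h1 : ∀ y ∈ D, ⟪y, v⟫ = 0 := fun y hy =>
      (Submodule.mem_orthogonal _ _).mp hv y (Submodule.subset_span hy)
    have h2 : v ∈ recCone X := by
      have : v ∈ ((ProperCone.innerDual D) : Set (EuclideanSpace ℝ (Fin n))) :=
        fun y hy => (h1 y hy).ge
      rw [hDdef] at this
      rw [hdd] at this
      exact this
    have h3 : -v ∈ recCone X := by
      have : -v ∈ ((ProperCone.innerDual D) : Set (EuclideanSpace ℝ (Fin n))) := by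
        intro y hy
        show 0 ≤ ⟪y, -v⟫
        rw [inner_neg_right, (h1 y hy)]
        simp
      rw [hDdef] at this
      rw [hdd] at this
      exact this
    have : v ∈ recCone X ∩ (-recCone X) := ⟨h2, by simpa [Set.mem_neg] using h3⟩
    rw [hpt] at this
    exact hv0 this
  have hDconv : Convex ℝ D := PointedCone.convex (ProperCone.innerDual (K : Set (EuclideanSpace ℝ (Fin n)))).toSubmodule
  have hint : (interior D).Nonempty := by
    rw [hDconv.interior_nonempty_iff_affineSpan_eq_top]
    rw [AffineSubspace.affineSpan_eq_top_iff_vectorSpan_eq_top_of_nonempty ℝ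
      (EuclideanSpace ℝ (Fin n)) (EuclideanSpace ℝ (Fin n)) ⟨0, hD0⟩]
    have hsub : D ⊆ (D -ᵥ D : Set (EuclideanSpace ℝ (Fin n))) := by
      intro y hy
      exact ⟨y, hy, 0, hD0, by simp⟩
    rw [vectorSpan_def]
    rw [eq_top_iff, ← hspan]
    exact Submodule.span_mono hsub
  obtain ⟨c₀, hc₀⟩ := hint
  obtain ⟨r, hr, hball⟩ := Metric.isOpen_iff.mp isOpen_interior c₀ hc₀
  refine ⟨-c₀, ?_⟩
  intro d hd hd0
  have hdn : 0 < ‖d‖ := norm_pos_iff.2 hd0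
  set s : ℝ := r / (2 * ‖d‖) with hs
  have hspos : 0 < s := by positivity
  have hyD : c₀ - s • d ∈ D := by
    apply interior_subset
    apply hball
    rw [mem_ball, dist_eq_norm]
    have h5 : c₀ - s • d - c₀ = -(s • d) := by abel
    rw [h5, norm_neg, norm_smul, Real.norm_eq_abs, abs_of_pos hspos]
    have h6 : s * ‖d‖ = r / 2 := by
      rw [hs]
      field_simp
    rw [h6]
    linarith
  have h0 : 0 ≤ ⟪d, c₀ - s • d⟫ := hyD hd
  rw [inner_sub_right, real_inner_smul_right, sub_nonneg] at h0
  have hdd2 : ⟪d, d⟫ = ‖d‖ ^ 2 := real_inner_self_eq_norm_sq d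
  rw [inner_neg_left, neg_lt, neg_zero, real_inner_comm]
  have : s * ‖d‖ ^ 2 ≤ ⟪d, c₀⟫ := by rw [← hdd2]; exact h0
  nlinarith [mul_pos hspos (pow_pos hdn 2)]

end Aux

theorem stmt9 {n : ℕ} (X : Set (EuclideanSpace ℝ (Fin n)))
    (hcl : IsClosed X) (hconv : Convex ℝ X)
    (hpt : recCone X ∩ (-recCone X) = {0})
    (ytil : EuclideanSpace ℝ (Fin n)) (hy : ytil ∉ X) :
    ∃ a : EuclideanSpace ℝ (Fin n), (∀ i, ∃ q : ℚ, a i = (q : ℝ)) ∧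
      supp X a < ((⟪a, ytil⟫ : ℝ) : EReal) := by
  classical
  obtain ⟨f, u, hfu, hfy⟩ := geometric_hahn_banach_closed_point hconv hcl hy
  obtain ⟨b, hb⟩ : ∃ b : EuclideanSpace ℝ (Fin n), ∀ w, ⟪b, w⟫ = f w :=
    ⟨(InnerProductSpace.toDual ℝ (EuclideanSpace ℝ (Fin n))).symm f, fun w =>
      InnerProductSpace.toDual_symm_apply⟩
  have hK : ∃ a₀ : EuclideanSpace ℝ (Fin n), ∃ ρ : ℝ, 0 < ρ ∧
      ∀ a ∈ Metric.closedBall a₀ ρ, ∀ d ∈ recCone X, ‖d‖ = 1 → ⟪a, d⟫ < 0 := by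
    obtain ⟨c, hc⟩ := exists_neg_on_cone hcl hpt
    by_cases hKS : (recCone X ∩ Metric.sphere (0 : EuclideanSpace ℝ (Fin n)) 1).Nonempty
    · have hcomp : IsCompact (recCone X ∩ Metric.sphere (0 : EuclideanSpace ℝ (Fin n)) 1) :=
        (isCompact_sphere _ _).inter_left (recCone_closed hcl)
      have hcont : ContinuousOn (fun d => ⟪c, d⟫)
          (recCone X ∩ Metric.sphere (0 : EuclideanSpace ℝ (Fin n)) 1) :=
        (continuous_const.inner continuous_id).continuousOn
      obtain ⟨d₀, hd₀, hmax⟩ := hcomp.exists_isMaxOn hKS hcont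
      set m := ⟪c, d₀⟫ with hm
      have hd₀n : d₀ ≠ 0 := by
        intro h
        have := mem_sphere_zero_iff_norm.mp hd₀.2
        rw [h, norm_zero] at this
        norm_num at this
      have hmneg : m < 0 := hc d₀ hd₀.1 hd₀n
      refine ⟨c, -m / 2, by linarith, ?_⟩
      intro a ha d hd hd1
      have h1 : ⟪c, d⟫ ≤ m := hmax ⟨hd, mem_sphere_zero_iff_norm.mpr hd1⟩
      have h2 : ⟪a - c, d⟫ ≤ ‖a - c‖ * ‖d‖ := real_inner_le_norm _ _
      have h3 : ‖a - c‖ ≤ -m / 2 := by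
        have := Metric.mem_closedBall.mp ha
        rwa [dist_eq_norm] at this
      have h4 : ⟪a, d⟫ = ⟪c, d⟫ + ⟪a - c, d⟫ := by
        rw [← inner_add_left]
        norm_num
      rw [hd1, mul_one] at h2
      rw [h4]
      linarith
    · refine ⟨0, 1, one_pos, fun a _ d hd hd1 => absurd ?_ (fun h => hKS ⟨d, h⟩)⟩
      exact ⟨hd, mem_sphere_zero_iff_norm.mpr hd1⟩
  obtain ⟨a₀, ρ, hρ, hneg⟩ := hK
  obtain ⟨M, hM⟩ := uniform_bound hcl hconv a₀ ρ hneg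
  set γ : ℝ := f ytil - u with hγdef
  have hγpos : 0 < γ := sub_pos.2 hfy
  set C₀ : ℝ := |M - u| + (‖a₀ - b‖ + ρ) * ‖ytil‖ + 1 with hC₀def
  have hPnn : 0 ≤ (‖a₀ - b‖ + ρ) * ‖ytil‖ := by positivity
  have hC₀ : 0 < C₀ := by positivity
  set θ : ℝ := min 1 (γ / (2 * C₀)) with hθdef
  have hθpos : 0 < θ := lt_min one_pos (by positivity)
  have hθ1 : θ ≤ 1 := min_le_left _ _
  have hθC : θ * C₀ ≤ γ / 2 := by
    calc θ * C₀ ≤ (γ / (2 * C₀)) * C₀ :=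
          mul_le_mul_of_nonneg_right (min_le_right _ _) hC₀.le
      _ = γ / 2 := by field_simp
  set z : EuclideanSpace ℝ (Fin n) := b + θ • (a₀ - b) with hzdef
  obtain ⟨a, haq, hadist⟩ := ratApprox z (mul_pos hθpos hρ)
  refine ⟨a, haq, ?_⟩
  set q : EuclideanSpace ℝ (Fin n) := a₀ + θ⁻¹ • (a - z) with hqdef
  have hqa : a = b + θ • (q - b) := by
    have h1 : q - b = (a₀ - b) + θ⁻¹ • (a - z) := by rw [hqdef]; abel
    rw [h1, smul_add, smul_inv_smul₀ hθpos.ne', ← add_assoc, ← hzdef]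
    abel
  have haz : ‖a - z‖ < θ * ρ := by rwa [← dist_eq_norm]
  have hqball : q ∈ Metric.closedBall a₀ ρ := by
    rw [Metric.mem_closedBall, dist_eq_norm, hqdef]
    have : a₀ + θ⁻¹ • (a - z) - a₀ = θ⁻¹ • (a - z) := by abel
    rw [this, norm_smul, norm_inv, Real.norm_eq_abs, abs_of_pos hθpos]
    calc θ⁻¹ * ‖a - z‖ ≤ θ⁻¹ * (θ * ρ) :=
          mul_le_mul_of_nonneg_left haz.le (by positivity)
      _ = ρ := by field_simp
  have hbound : ∀ x ∈ X, ⟪a, x⟫ ≤ (1 - θ) * u + θ * M := by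
    intro x hx
    have h1 : ⟪b, x⟫ ≤ u := by rw [hb x]; exact (hfu x hx).le
    have h2 : ⟪q, x⟫ ≤ M := hM q hqball x hx
    have h3 : ⟪a, x⟫ = (1 - θ) * ⟪b, x⟫ + θ * ⟪q, x⟫ := by
      rw [hqa, inner_add_left, real_inner_smul_left, inner_sub_left]
      ring
    rw [h3]
    have h4 : (1 - θ) * ⟪b, x⟫ ≤ (1 - θ) * u := mul_le_mul_of_nonneg_left h1 (by linarith)
    have h5 : θ * ⟪q, x⟫ ≤ θ * M := mul_le_mul_of_nonneg_left h2 hθpos.le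
    linarith
  have hstrict : (1 - θ) * u + θ * M < ⟪a, ytil⟫ := by
    have h1 : ⟪a, ytil⟫ = ⟪b, ytil⟫ + ⟪a - b, ytil⟫ := by
      rw [← inner_add_left]
      norm_num
    have h3 : ‖a - b‖ ≤ θ * (‖a₀ - b‖ + ρ) := by
      have hab : a - b = θ • (a₀ - b) + (a - z) := by rw [hzdef]; abel
      calc ‖a - b‖ ≤ ‖θ • (a₀ - b)‖ + ‖a - z‖ := by rw [hab]; exact norm_add_le _ _
        _ ≤ θ * ‖a₀ - b‖ + θ * ρ := by
            rw [norm_smul, Real.norm_eq_abs, abs_of_pos hθpos]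
            linarith [haz.le]
        _ = θ * (‖a₀ - b‖ + ρ) := by ring
    have h2 : |⟪a - b, ytil⟫| ≤ ‖a - b‖ * ‖ytil‖ := abs_real_inner_le_norm _ _
    have h2' : -(θ * ((‖a₀ - b‖ + ρ) * ‖ytil‖)) ≤ ⟪a - b, ytil⟫ := by
      have := neg_abs_le ⟪a - b, ytil⟫
      have h6 : ‖a - b‖ * ‖ytil‖ ≤ θ * ((‖a₀ - b‖ + ρ) * ‖ytil‖) := by
        calc ‖a - b‖ * ‖ytil‖ ≤ (θ * (‖a₀ - b‖ + ρ)) * ‖ytil‖ :=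
              mul_le_mul_of_nonneg_right h3 (norm_nonneg _)
          _ = θ * ((‖a₀ - b‖ + ρ) * ‖ytil‖) := by ring
      linarith [abs_le.mp h2]
    have hMu : M - u ≤ |M - u| := le_abs_self _
    have hby : ⟪b, ytil⟫ = f ytil := hb ytil
    have hkey : θ * |M - u| + θ * ((‖a₀ - b‖ + ρ) * ‖ytil‖) < γ := by
      have : θ * |M - u| + θ * ((‖a₀ - b‖ + ρ) * ‖ytil‖) = θ * C₀ - θ := by
        rw [hC₀def]; ring
      rw [this]
      linarith
    have hMθ : θ * (M - u) ≤ θ * |M - u| := mul_le_mul_of_nonneg_left hMu hθpos.le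
    rw [h1, hby]
    have : (1 - θ) * u + θ * M = u + θ * (M - u) := by ring
    rw [this]
    have hfy' : f ytil = u + γ := by rw [hγdef]; ring
    rw [hfy']
    linarith
  have hle : supp X a ≤ (((1 - θ) * u + θ * M : ℝ) : EReal) := by
    refine iSup₂_le fun x hx => ?_
    exact_mod_cast hbound x hx
  exact lt_of_le_of_lt hle (by exact_mod_cast hstrict)
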